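/- Suppose $v(x) = \sigma^2 + \int_{|y|<x}y^2\,\Pi(dy)$ is slowly varying at $0$ (index $0$) and positive for small $x$. Then $x^2\,\overline\Pi(x)/v(x) \to 0$ as $x \downarrow 0$, where $\overline\Pi(x) = \Pi(\mathbb{R}\setminus[-x,x])$. -/

import Mathlib

set_option maxHeartbeats 1000000
open MeasureTheory Filter Topology Set

namespace TailNegAux
variable {μ : Measure ℝ}

lemma measSet_lt (x : ℝ) : MeasurableSet {y : ℝ | |y| < x} :=
  measurableSet_lt measurable_abs measurable_const

lemma measSet_ann (a b : ℝ) : MeasurableSet {y : ℝ | a ≤ |y| ∧ |y| < b} :=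
  (measurableSet_le measurable_const measurable_abs).inter
    (measurableSet_lt measurable_abs measurable_const)

lemma tail_ne_top (hlevy : ∫⁻ x, ENNReal.ofReal (min (x ^ 2) 1) ∂μ ≠ ⊤)
    {a : ℝ} (ha : 0 < a) : μ {y : ℝ | a ≤ |y|} ≠ ⊤ := by
  set c : ENNReal := ENNReal.ofReal (min (a ^ 2) 1) with hc
  have hc0 : 0 < c := ENNReal.ofReal_pos.mpr (by positivity)
  have hb : c * μ {y : ℝ | a ≤ |y|} ≤ ∫⁻ x, ENNReal.ofReal (min (x ^ 2) 1) ∂μ := by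
    rw [← setLIntegral_const]
    refine le_trans (setLIntegral_mono (by measurability) ?_) (setLIntegral_le_lintegral _ _)
    intro y hy
    refine ENNReal.ofReal_le_ofReal (min_le_min ?_ le_rfl)
    calc a ^ 2 ≤ |y| ^ 2 := by gcongr; exact hy
    _ = y ^ 2 := sq_abs y
  intro h
  rw [h, ENNReal.mul_top hc0.ne'] at hb
  exact hlevy (top_le_iff.mp hb)

lemma ann_ne_top (hlevy : ∫⁻ x, ENNReal.ofReal (min (x ^ 2) 1) ∂μ ≠ ⊤)
    {a b : ℝ} (ha : 0 < a) : μ {y : ℝ | a ≤ |y| ∧ |y| < b} ≠ ⊤ :=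
  fun h => tail_ne_top hlevy ha (top_le_iff.mp (h ▸ measure_mono (fun y hy => hy.1)))

lemma sq_integrableOn (hlevy : ∫⁻ x, ENNReal.ofReal (min (x ^ 2) 1) ∂μ ≠ ⊤) :
    IntegrableOn (fun y : ℝ => y ^ 2) {y : ℝ | |y| < 1} μ := by
  constructor
  · exact (measurable_id.pow_const 2).aestronglyMeasurable
  · rw [hasFiniteIntegral_iff_ofReal (ae_of_all _ fun y => sq_nonneg y)]
    calc ∫⁻ y in {y : ℝ | |y| < 1}, ENNReal.ofReal (y ^ 2) ∂μ
        = ∫⁻ y in {y : ℝ | |y| < 1}, ENNReal.ofReal (min (y ^ 2) 1) ∂μ := by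
          refine setLIntegral_congr_fun (measSet_lt 1) (fun y hy => ?_)
          have : y ^ 2 ≤ 1 := by
            have := sq_abs y ▸ (by gcongr; exact hy.le : |y| ^ 2 ≤ 1 ^ 2)
            simpa using this
          rw [min_eq_left this]
    _ ≤ ∫⁻ y, ENNReal.ofReal (min (y ^ 2) 1) ∂μ := setLIntegral_le_lintegral _ _
    _ < ⊤ := hlevy.lt_top

lemma vdiff (σ : ℝ) (v : ℝ → ℝ)
    (hv : ∀ x, v x = σ ^ 2 + ∫ y in {y : ℝ | |y| < x}, y ^ 2 ∂μ)
    (hint : IntegrableOn (fun y : ℝ => y ^ 2) {y : ℝ | |y| < 1} μ)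
    {a b : ℝ} (hab : a ≤ b) (hb : b ≤ 1) :
    v b - v a = ∫ y in {y : ℝ | a ≤ |y| ∧ |y| < b}, y ^ 2 ∂μ := by
  have hsub : {y : ℝ | |y| < b} ⊆ {y : ℝ | |y| < 1} := fun y hy => lt_of_lt_of_le hy hb
  have hset : {y : ℝ | |y| < b} = {y : ℝ | |y| < a} ∪ {y : ℝ | a ≤ |y| ∧ |y| < b} := by
    ext y
    simp only [mem_setOf_eq, mem_union]
    constructor
    · intro h
      rcases lt_or_ge |y| a with h' | h'
      · exact Or.inl h'
      · exact Or.inr ⟨h', h⟩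
    · rintro (h | ⟨_, h⟩)
      · exact h.trans_le hab
      · exact h
  have hdisj : Disjoint {y : ℝ | |y| < a} {y : ℝ | a ≤ |y| ∧ |y| < b} := by
    rw [Set.disjoint_left]
    intro y hy hy2
    exact absurd hy2.1 (not_le.mpr hy)
  rw [hv, hv, hset, setIntegral_union hdisj (measSet_ann a b)
    ((hint.mono_set hsub).mono_set (hset ▸ subset_union_left))
    ((hint.mono_set hsub).mono_set (hset ▸ subset_union_right))]
  ring

lemma vmono (σ : ℝ) (v : ℝ → ℝ)
    (hv : ∀ x, v x = σ ^ 2 + ∫ y in {y : ℝ | |y| < x}, y ^ 2 ∂μ)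
    (hint : IntegrableOn (fun y : ℝ => y ^ 2) {y : ℝ | |y| < 1} μ)
    {a b : ℝ} (hab : a ≤ b) (hb : b ≤ 1) : v a ≤ v b := by
  have h := vdiff σ v hv hint hab hb
  have h2 : 0 ≤ ∫ y in {y : ℝ | a ≤ |y| ∧ |y| < b}, y ^ 2 ∂μ :=
    setIntegral_nonneg (measSet_ann a b) (fun y _ => sq_nonneg y)
  linarith

/-- annulus mass bound: a² μ(ann).toReal ≤ v b - v a -/
lemma ann_bound (σ : ℝ) (v : ℝ → ℝ)
    (hlevy : ∫⁻ x, ENNReal.ofReal (min (x ^ 2) 1) ∂μ ≠ ⊤)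
    (hv : ∀ x, v x = σ ^ 2 + ∫ y in {y : ℝ | |y| < x}, y ^ 2 ∂μ)
    (hint : IntegrableOn (fun y : ℝ => y ^ 2) {y : ℝ | |y| < 1} μ)
    {a b : ℝ} (ha : 0 < a) (hab : a ≤ b) (hb : b ≤ 1) :
    a ^ 2 * (μ {y : ℝ | a ≤ |y| ∧ |y| < b}).toReal ≤ v b - v a := by
  rw [vdiff σ v hv hint hab hb]
  set S := {y : ℝ | a ≤ |y| ∧ |y| < b} with hS
  have hfin : μ S < ⊤ := (ann_ne_top hlevy ha).lt_top
  have hSsub : S ⊆ {y : ℝ | |y| < 1} := fun y hy => lt_of_lt_of_le hy.2 hb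
  have h1 : ∫ y in S, (a ^ 2 : ℝ) ∂μ ≤ ∫ y in S, y ^ 2 ∂μ := by
    refine setIntegral_mono_on (integrableOn_const hfin.ne)
      (hint.mono_set hSsub) (measSet_ann a b) ?_
    intro y hy
    calc a ^ 2 ≤ |y| ^ 2 := by gcongr; exact hy.1
    _ = y ^ 2 := sq_abs y
  rw [setIntegral_const, smul_eq_mul, measureReal_def] at h1
  linarith [h1]

end TailNegAux

open TailNegAux

/-- If the truncated variance `v x = σ² + ∫_{|y|<x} y² dΠ` is slowly varying at
`0` (and positive for small `x`), then `x² Π̄(x) / v(x) → 0` as `x ↓ 0`. -/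
theorem tail_negligible_of_slowly_varying_variance (Pi0 : Measure ℝ) (σ : ℝ)
    (hσ : 0 ≤ σ) (hPi0 : Pi0 {0} = 0)
    (hlevy : ∫⁻ x, ENNReal.ofReal (min (x ^ 2) 1) ∂Pi0 ≠ ⊤)
    (v : ℝ → ℝ)
    (hv : ∀ x, v x = σ ^ 2 + ∫ y in {y : ℝ | |y| < x}, y ^ 2 ∂Pi0)
    (hpos : ∀ᶠ x in 𝓝[>] (0:ℝ), 0 < v x)
    (hsv : ∀ l > (0:ℝ), Tendsto (fun x => v (l * x) / v x) (𝓝[>] (0:ℝ)) (𝓝 1)) :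
    Tendsto (fun x => x ^ 2 * (Pi0 {y | x < |y|}).toReal / v x)
      (𝓝[>] (0:ℝ)) (𝓝 0) := by
  classical
  have hint : IntegrableOn (fun y : ℝ => y ^ 2) {y : ℝ | |y| < 1} Pi0 :=
    sq_integrableOn hlevy
  -- Step 1: a linear lower bound for v near 0.
  have h12 : ∀ᶠ x in 𝓝[>] (0:ℝ), (1:ℝ)/2 < v ((1/2) * x) / v x ∧ 0 < v x :=
    ((hsv (1/2) (by norm_num)).eventually_const_lt (by norm_num)).and hpos
  rw [eventually_iff, mem_nhdsGT_iff_exists_Ioc_subset] at h12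
  obtain ⟨ε₂', hε₂'mem, hε₂'⟩ := h12
  set ε₂ : ℝ := min ε₂' 1 with hε₂def
  have hε₂pos : 0 < ε₂ := lt_min (mem_Ioi.mp hε₂'mem) one_pos
  have hε₂le1 : ε₂ ≤ 1 := min_le_right _ _
  have hhalf : ∀ y ∈ Ioc (0:ℝ) ε₂, v y / 2 ≤ v (y / 2) ∧ 0 < v y := by
    intro y hy
    obtain ⟨h1, h2⟩ := hε₂' ⟨hy.1, hy.2.trans (min_le_left _ _)⟩
    refine ⟨?_, h2⟩
    have h3 : 1/2 * v y < v ((1/2) * y) := (lt_div_iff₀ h2).mp h1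
    have h4 : (1/2 : ℝ) * y = y / 2 := by ring
    rw [h4] at h3
    linarith
  have hvε₂pos : 0 < v ε₂ := (hhalf ε₂ ⟨hε₂pos, le_rfl⟩).2
  have hlown : ∀ n : ℕ, v ε₂ / 2 ^ n ≤ v (ε₂ / 2 ^ n) := by
    intro n
    induction n with
    | zero => simp
    | succ n ih =>
      have hmem : ε₂ / 2 ^ n ∈ Ioc (0:ℝ) ε₂ :=
        ⟨by positivity, div_le_self hε₂pos.le (one_le_pow₀ (by norm_num))⟩
      have h1 := (hhalf _ hmem).1
      have h2 : ε₂ / 2 ^ (n+1) = (ε₂ / 2 ^ n) / 2 := by rw [pow_succ]; ring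
      have h3 : v ε₂ / 2 ^ (n+1) = (v ε₂ / 2 ^ n) / 2 := by rw [pow_succ]; ring
      rw [h2, h3]
      linarith
  set c : ℝ := v ε₂ / (2 * ε₂) with hcdef
  have hc0 : 0 < c := by positivity
  have hclow : ∀ x ∈ Ioc (0:ℝ) ε₂, c * x ≤ v x := by
    intro x hx
    have hex : ∃ n : ℕ, ε₂ / 2 ^ n ≤ x := by
      obtain ⟨n, hn⟩ := pow_unbounded_of_one_lt (ε₂ / x) (by norm_num : (1:ℝ) < 2)
      refine ⟨n, ?_⟩
      rw [div_le_iff₀ (by positivity)]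
      rw [div_lt_iff₀ hx.1] at hn
      nlinarith
    have h1 : ε₂ / 2 ^ (Nat.find hex) ≤ x := Nat.find_spec hex
    have h2 : v (ε₂ / 2 ^ (Nat.find hex)) ≤ v x :=
      vmono σ v hv hint h1 (hx.2.trans hε₂le1)
    have hxn : x * 2 ^ (Nat.find hex) ≤ 2 * ε₂ := by
      rcases Nat.eq_zero_or_pos (Nat.find hex) with h0 | hposn
      · rw [h0, pow_zero, mul_one]; linarith [hx.2]
      · obtain ⟨m, hm⟩ := Nat.exists_eq_succ_of_ne_zero hposn.ne'
        have h4 : x < ε₂ / 2 ^ m := lt_of_not_ge (Nat.find_min hex (by omega))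
        have h5 : x * 2 ^ m < ε₂ := by
          rw [← lt_div_iff₀ (by positivity : (0:ℝ) < 2 ^ m)]; exact h4
        rw [hm, pow_succ]; nlinarith
    have h6 : x ≤ 2 * ε₂ / 2 ^ (Nat.find hex) :=
      (le_div_iff₀ (by positivity)).mpr hxn
    calc c * x ≤ c * (2 * ε₂ / 2 ^ (Nat.find hex)) :=
          mul_le_mul_of_nonneg_left h6 hc0.le
    _ = v ε₂ / 2 ^ (Nat.find hex) := by
      rw [hcdef]
      have h2n : (0:ℝ) < 2 ^ Nat.find hex := by positivity
      generalize (2:ℝ) ^ Nat.find hex = t at h2n ⊢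
      field_simp
    _ ≤ v x := (hlown _).trans h2
  -- geometric sum bound
  have hsum2 : ∀ N : ℕ, (∑ k ∈ Finset.range N, ((1:ℝ)/2) ^ k) ≤ 2 := by
    have key : ∀ N : ℕ, (∑ k ∈ Finset.range N, ((1:ℝ)/2) ^ k) = 2 - 2 * (1/2) ^ N := by
      intro N
      induction N with
      | zero => simp
      | succ N ih => rw [Finset.sum_range_succ, ih, pow_succ]; ring
    intro N
    rw [key N]
    have : (0:ℝ) ≤ (1/2) ^ N := by positivity
    linarith
  -- Step 2: the ε-argument.
  rw [NormedAddCommGroup.tendsto_nhds_zero]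
  intro ε hε
  set η : ℝ := min 1 (ε / 8) with hηdef
  have hη0 : 0 < η := lt_min one_pos (by positivity)
  have hη1 : η ≤ 1 := min_le_left _ _
  have hη8 : η ≤ ε / 8 := min_le_right _ _
  have h2η : ∀ᶠ x in 𝓝[>] (0:ℝ), v (2 * x) / v x < 1 + η ∧ 0 < v x :=
    ((hsv 2 (by norm_num)).eventually_lt_const (by linarith)).and hpos
  rw [eventually_iff, mem_nhdsGT_iff_exists_Ioc_subset] at h2η
  obtain ⟨ε₁, hε₁mem, hε₁⟩ := h2η
  set ε' : ℝ := min ε₁ (1/2) with hε'def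
  have hε'pos : 0 < ε' := lt_min (mem_Ioi.mp hε₁mem) (by norm_num)
  have hε'half : ε' ≤ 1/2 := min_le_right _ _
  have hstep : ∀ y ∈ Ioc (0:ℝ) ε', v (2 * y) ≤ (1 + η) * v y ∧ 0 < v y := by
    intro y hy
    obtain ⟨h1, h2⟩ := hε₁ ⟨hy.1, hy.2.trans (min_le_left _ _)⟩
    exact ⟨le_of_lt ((div_lt_iff₀ h2).mp h1), h2⟩
  -- growth of v along dyadic scales
  have hgrow : ∀ x : ℝ, 0 < x → ∀ N : ℕ, (∀ k < N, 2 ^ k * x ≤ ε') →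
      v (2 ^ N * x) ≤ (1 + η) ^ N * v x := by
    intro x hx N
    induction N with
    | zero => intro _; simp
    | succ N ih =>
      intro hk
      have hmem : 2 ^ N * x ∈ Ioc (0:ℝ) ε' := ⟨by positivity, hk N (Nat.lt_succ_self N)⟩
      have h1 := (hstep _ hmem).1
      have h2 := ih (fun k hkN => hk k (hkN.trans (Nat.lt_succ_self N)))
      have heq : (2:ℝ) ^ (N+1) * x = 2 * (2 ^ N * x) := by ring
      rw [heq]
      calc v (2 * (2 ^ N * x)) ≤ (1 + η) * v (2 ^ N * x) := h1
      _ ≤ (1 + η) * ((1 + η) ^ N * v x) :=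
          mul_le_mul_of_nonneg_left h2 (by linarith)
      _ = (1 + η) ^ (N+1) * v x := by ring
  -- dyadic tail estimate
  have hdyadic : ∀ x : ℝ, 0 < x → ∀ N : ℕ, (∀ k < N, 2 ^ k * x ≤ ε') →
      x ^ 2 * (Pi0 {y : ℝ | x ≤ |y| ∧ |y| < 2 ^ N * x}).toReal ≤
        η * (∑ k ∈ Finset.range N, ((1:ℝ)/2) ^ k) * v x := by
    intro x hx N
    induction N with
    | zero =>
      intro _
      have hempty : {y : ℝ | x ≤ |y| ∧ |y| < 2 ^ 0 * x} = (∅ : Set ℝ) := by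
        ext y
        simp only [pow_zero, one_mul, mem_setOf_eq, mem_empty_iff_false, iff_false, not_and,
          not_lt]
        exact fun h => h
      rw [hempty]
      simp
    | succ N ih =>
      intro hk
      have hkN : 2 ^ N * x ≤ ε' := hk N (Nat.lt_succ_self N)
      have hxε' : x ≤ ε' := by simpa using hk 0 (Nat.succ_pos N)
      have h2N1 : (2:ℝ) ^ (N+1) * x = 2 * (2 ^ N * x) := by ring
      have h2Nle1 : (2:ℝ) ^ (N+1) * x ≤ 1 := by rw [h2N1]; linarith
      have hone_le : (1:ℝ) ≤ 2 ^ N := one_le_pow₀ (by norm_num)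
      have hxle : x ≤ 2 ^ N * x := by nlinarith
      have hNpos : (0:ℝ) < 2 ^ N * x := by positivity
      have hNle : (2:ℝ) ^ N * x ≤ 2 ^ (N+1) * x := by rw [h2N1]; linarith
      set A := {y : ℝ | x ≤ |y| ∧ |y| < 2 ^ N * x} with hAdef
      set B := {y : ℝ | 2 ^ N * x ≤ |y| ∧ |y| < 2 ^ (N+1) * x} with hBdef
      have hsplit : {y : ℝ | x ≤ |y| ∧ |y| < 2 ^ (N+1) * x} = A ∪ B := by
        ext y
        simp only [hAdef, hBdef, mem_setOf_eq, mem_union]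
        constructor
        · rintro ⟨h1, h2⟩
          rcases lt_or_ge |y| (2 ^ N * x) with h3 | h3
          · exact Or.inl ⟨h1, h3⟩
          · exact Or.inr ⟨h3, h2⟩
        · rintro (⟨h1, h2⟩ | ⟨h1, h2⟩)
          · exact ⟨h1, h2.trans_le hNle⟩
          · exact ⟨hxle.trans h1, h2⟩
      have hdisj : Disjoint A B := by
        rw [Set.disjoint_left]
        rintro y ⟨_, h2⟩ ⟨h3, _⟩
        exact absurd h3 (not_le.mpr h2)
      have hAfin : Pi0 A ≠ ⊤ := ann_ne_top hlevy hx
      have hBfin : Pi0 B ≠ ⊤ := ann_ne_top hlevy hNpos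
      have htoReal : (Pi0 (A ∪ B)).toReal = (Pi0 A).toReal + (Pi0 B).toReal := by
        rw [measure_union hdisj (measSet_ann _ _), ENNReal.toReal_add hAfin hBfin]
      -- bound for B
      have hBb := ann_bound σ v hlevy hv hint (a := 2 ^ N * x) (b := 2 ^ (N+1) * x)
        hNpos hNle h2Nle1
      have hvstep : v (2 ^ (N+1) * x) - v (2 ^ N * x) ≤ η * v (2 ^ N * x) := by
        have h1 := (hstep (2 ^ N * x) ⟨hNpos, hkN⟩).1
        rw [h2N1]; linarith
      have hgrowN := hgrow x hx N (fun k hkN' => hk k (hkN'.trans (Nat.lt_succ_self N)))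
      have hpow2 : (1 + η) ^ N ≤ 2 ^ N := pow_le_pow_left₀ (by linarith) (by linarith) N
      have hvxpos : 0 < v x := (hstep x ⟨hx, hxε'⟩).2
      have h5 : v (2 ^ N * x) ≤ 2 ^ N * v x :=
        hgrowN.trans (mul_le_mul_of_nonneg_right hpow2 hvxpos.le)
      have hB2 : (2 ^ N * x) ^ 2 * (Pi0 B).toReal ≤ η * 2 ^ N * v x := by
        calc (2 ^ N * x) ^ 2 * (Pi0 B).toReal
            ≤ v (2 ^ (N+1) * x) - v (2 ^ N * x) := hBb
        _ ≤ η * v (2 ^ N * x) := hvstep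
        _ ≤ η * (2 ^ N * v x) := mul_le_mul_of_nonneg_left h5 hη0.le
        _ = η * 2 ^ N * v x := by ring
      have h4N : ((2:ℝ) ^ N) ^ 2 = 4 ^ N := by
        rw [show (4:ℝ) = 2 ^ 2 by norm_num, pow_right_comm]
      have hpow : ((1:ℝ)/2) ^ N * 4 ^ N = 2 ^ N := by
        rw [← mul_pow]; norm_num
      have h4pos : (0:ℝ) < 4 ^ N := by positivity
      have hB3 : x ^ 2 * (Pi0 B).toReal ≤ η * ((1:ℝ)/2) ^ N * v x := by
        have heq : η * ((1:ℝ)/2) ^ N * v x = (η * 2 ^ N * v x) / 4 ^ N := by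
          rw [eq_div_iff h4pos.ne']
          linear_combination (η * v x) * hpow
        rw [heq, le_div_iff₀ h4pos]
        calc x ^ 2 * (Pi0 B).toReal * 4 ^ N = (2 ^ N * x) ^ 2 * (Pi0 B).toReal := by
              rw [mul_pow, h4N]; ring
        _ ≤ η * 2 ^ N * v x := hB2
      have hA' := ih (fun k hkN' => hk k (hkN'.trans (Nat.lt_succ_self N)))
      rw [hsplit, htoReal, Finset.sum_range_succ]
      nlinarith [hA', hB3]
  -- choose constants and conclude
  set C : ℝ := (Pi0 {y : ℝ | ε' ≤ |y|}).toReal with hCdef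
  have hC0 : 0 ≤ C := ENNReal.toReal_nonneg
  set δ : ℝ := min (min ε' ε₂) (ε * c / (4 * (C + 1))) with hδdef
  have hδ0 : 0 < δ := lt_min (lt_min hε'pos hε₂pos) (by positivity)
  rw [eventually_iff, mem_nhdsGT_iff_exists_Ioc_subset]
  refine ⟨δ, hδ0, ?_⟩
  rintro x ⟨hx0, hxδ⟩
  have hxε' : x ≤ ε' := hxδ.trans ((min_le_left _ _).trans (min_le_left _ _))
  have hxε₂ : x ≤ ε₂ := hxδ.trans ((min_le_left _ _).trans (min_le_right _ _))
  have hxδ2 : x ≤ ε * c / (4 * (C + 1)) := hxδ.trans (min_le_right _ _)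
  have hvx : 0 < v x := (hstep x ⟨hx0, hxε'⟩).2
  have hcx : c * x ≤ v x := hclow x ⟨hx0, hxε₂⟩
  have hex : ∃ n : ℕ, ε' < 2 ^ n * x := by
    obtain ⟨n, hn⟩ := pow_unbounded_of_one_lt (ε' / x) (by norm_num : (1:ℝ) < 2)
    refine ⟨n, ?_⟩
    rw [div_lt_iff₀ hx0] at hn
    linarith
  have hN : ε' < 2 ^ (Nat.find hex) * x := Nat.find_spec hex
  have hk : ∀ k < Nat.find hex, 2 ^ k * x ≤ ε' :=
    fun k hkN => not_lt.mp (Nat.find_min hex hkN)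
  have hsub : {y : ℝ | x < |y|} ⊆
      {y : ℝ | x ≤ |y| ∧ |y| < 2 ^ (Nat.find hex) * x} ∪ {y : ℝ | ε' ≤ |y|} := by
    intro y hy
    rcases lt_or_ge |y| (2 ^ (Nat.find hex) * x) with h1 | h1
    · exact Or.inl ⟨le_of_lt hy, h1⟩
    · exact Or.inr (hN.le.trans h1)
  have hAfin := ann_ne_top (b := 2 ^ (Nat.find hex) * x) hlevy hx0
  have hCfin := tail_ne_top hlevy hε'pos
  have hm : (Pi0 {y : ℝ | x < |y|}).toReal ≤
      (Pi0 {y : ℝ | x ≤ |y| ∧ |y| < 2 ^ (Nat.find hex) * x}).toReal + C := by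
    have h1 : Pi0 {y : ℝ | x < |y|} ≤
        Pi0 {y : ℝ | x ≤ |y| ∧ |y| < 2 ^ (Nat.find hex) * x} + Pi0 {y : ℝ | ε' ≤ |y|} :=
      (measure_mono hsub).trans (measure_union_le _ _)
    have h2 := ENNReal.toReal_mono (ENNReal.add_ne_top.mpr ⟨hAfin, hCfin⟩) h1
    rwa [ENNReal.toReal_add hAfin hCfin] at h2
  have hA : x ^ 2 * (Pi0 {y : ℝ | x ≤ |y| ∧ |y| < 2 ^ (Nat.find hex) * x}).toReal ≤
      η * 2 * v x := by
    have h1 := hdyadic x hx0 (Nat.find hex) hk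
    have h2 : η * (∑ k ∈ Finset.range (Nat.find hex), ((1:ℝ)/2) ^ k) * v x ≤ η * 2 * v x :=
      mul_le_mul_of_nonneg_right
        (mul_le_mul_of_nonneg_left (hsum2 _) hη0.le) hvx.le
    linarith
  have hCx : C * x ≤ ε * c / 4 := by
    have h1 : C * x ≤ C * (ε * c / (4 * (C + 1))) := mul_le_mul_of_nonneg_left hxδ2 hC0
    have h2 : C * (ε * c / (4 * (C + 1))) ≤ ε * c / 4 := by
      rw [← mul_div_assoc, div_le_div_iff₀ (by positivity) (by norm_num)]
      nlinarith [mul_pos hε hc0]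
    linarith
  show ‖x ^ 2 * (Pi0 {y | x < |y|}).toReal / v x‖ < ε
  have hm0 : (0:ℝ) ≤ (Pi0 {y : ℝ | x < |y|}).toReal := ENNReal.toReal_nonneg
  rw [Real.norm_eq_abs, abs_of_nonneg (div_nonneg (by positivity) hvx.le), div_lt_iff₀ hvx]
  have hmain : x ^ 2 * (Pi0 {y : ℝ | x < |y|}).toReal ≤ η * 2 * v x + C * x ^ 2 := by
    nlinarith [mul_le_mul_of_nonneg_left hm (sq_nonneg x), hA]
  nlinarith [hmain, mul_le_mul_of_nonneg_right hCx hx0.le,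
    mul_le_mul_of_nonneg_left hcx (by positivity : (0:ℝ) ≤ ε / 4),
    mul_le_mul_of_nonneg_right hη8 hvx.le, mul_pos hε hvx, hx0, hvx]
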